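/- Let f : E → [0,∞] be strictly upper radial and let x, y ∈ E satisfy (x, f(x)) = Γ(y, f^Γ(y)) with both points in E × ℝ₊₊, and fix an integer k ≥ 1. Then f is finite and k times continuously differentiable on a neighborhood of x with ⟨∇f(x), x⟩ − f(x) < 0 if and only if f^Γ (which then equals f_Γ) is finite and k times continuously differentiable on a neighborhood of y with ⟨∇f^Γ(y), y⟩ − f^Γ(y) < 0, in which case ∇f^Γ(y) = ∇f(x) / (⟨∇f(x), x⟩ − f(x)). -/

import Mathlib

open Set
open scoped ENNReal RealInnerProductSpace

noncomputable section

variable {E : Type*} [NormedAddCommGroup E] [InnerProductSpace ℝ E] [FiniteDimensional ℝ E]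

/-- The perspective function `f^p(y,v) = v·f(y/v)` (for `v > 0`). -/
def persp (f : E → ℝ≥0∞) (y : E) (v : ℝ) : ℝ≥0∞ := ENNReal.ofReal v * f (v⁻¹ • y)

/-- The upper radial transformation `f^Γ(y) = sup{v > 0 : v·f(y/v) ≤ 1}` (`sup ∅ = 0`). -/
def radSup (f : E → ℝ≥0∞) (y : E) : ℝ≥0∞ :=
  ⨆ (v : ℝ) (_ : 0 < v) (_ : persp f y v ≤ 1), ENNReal.ofReal v

/-- The lower radial transformation `f_Γ(y) = inf{v > 0 : v·f(y/v) ≥ 1}` (`inf ∅ = ∞`). -/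
def radInf (f : E → ℝ≥0∞) (y : E) : ℝ≥0∞ :=
  ⨅ (v : ℝ) (_ : 0 < v) (_ : 1 ≤ persp f y v), ENNReal.ofReal v

/-- `f` is strictly upper radial: every `f^p(y,·)` is nondecreasing and upper
semicontinuous on `ℝ₊₊`, and strictly increasing on `{v > 0 : 0 < f^p(y,v) < ∞}`. -/
def StrictUpperRadial (f : E → ℝ≥0∞) : Prop :=
  ∀ y : E, MonotoneOn (persp f y) (Ioi (0 : ℝ)) ∧
    UpperSemicontinuousOn (persp f y) (Ioi (0 : ℝ)) ∧
    StrictMonoOn (persp f y) {v : ℝ | 0 < v ∧ 0 < persp f y v ∧ persp f y v ≠ ⊤}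

/-- `g : E → ℝ≥0∞` is finite and `k` times continuously differentiable on a neighborhood
of `x`, with `⟨∇g(x), x⟩ − g(x) < 0`. -/
def SmoothlyRadialAt (g : E → ℝ≥0∞) (k : ℕ) (x : E) : Prop :=
  (∃ U ∈ nhds x, (∀ z ∈ U, g z ≠ ⊤) ∧ ContDiffOn ℝ k (fun z => (g z).toReal) U) ∧
    ⟪gradient (fun z => (g z).toReal) x, x⟫ - (g x).toReal < 0

open Filter Topology ContinuousLinearMap

section Aux

lemma radSup_eq_of_persp_eq_one {f : E → ℝ≥0∞} (hrad : StrictUpperRadial f)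
    {w : E} {v₀ : ℝ} (hv₀ : 0 < v₀) (h1 : persp f w v₀ = 1) :
    radSup f w = ENNReal.ofReal v₀ := by
  obtain ⟨hmono, -, hsm⟩ := hrad w
  refine le_antisymm (iSup_le fun v => iSup_le fun hv => iSup_le fun hp => ?_) ?_
  · rcases le_or_gt v v₀ with h | h
    · exact ENNReal.ofReal_le_ofReal h
    · exfalso
      have hle : persp f w v₀ ≤ persp f w v := hmono hv₀ (hv₀.trans h) h.le
      have hpv : persp f w v = 1 := le_antisymm hp (h1 ▸ hle)
      have := hsm (a := v₀) (b := v)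
        ⟨hv₀, by simp [h1], by simp [h1]⟩ ⟨hv₀.trans h, by simp [hpv], by simp [hpv]⟩ h
      simp [h1, hpv] at this
  · refine le_trans ?_ (le_iSup _ v₀)
    rw [iSup_pos hv₀, iSup_pos h1.le]

lemma radSup_le_of_persp_gt_one {f : E → ℝ≥0∞} (hrad : StrictUpperRadial f)
    {w : E} {v : ℝ} (hv : 0 < v) (h1 : 1 < persp f w v) :
    radSup f w ≤ ENNReal.ofReal v := by
  obtain ⟨hmono, -, -⟩ := hrad w
  refine iSup_le fun c => iSup_le fun hc => iSup_le fun hp => ?_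
  rcases le_or_gt c v with h | h
  · exact ENNReal.ofReal_le_ofReal h
  · exact absurd ((hmono hv (hv.trans h) h.le).trans hp) h1.not_ge

lemma ofReal_le_radSup_of_persp_le_one {f : E → ℝ≥0∞}
    {w : E} {v : ℝ} (hv : 0 < v) (h1 : persp f w v ≤ 1) :
    ENNReal.ofReal v ≤ radSup f w := by
  refine le_trans ?_ (le_iSup _ v)
  rw [iSup_pos hv, iSup_pos h1]

lemma radSup_eq_radInf {f : E → ℝ≥0∞} (hrad : StrictUpperRadial f) :
    radSup f = radInf f := by
  funext w
  obtain ⟨hmono, -, hsm⟩ := hrad w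
  refine le_antisymm ?_ ?_
  · refine le_iInf fun v' => le_iInf fun hv' => le_iInf fun hp' => ?_
    refine iSup_le fun v => iSup_le fun hv => iSup_le fun hp => ?_
    rcases le_or_gt v v' with h | h
    · exact ENNReal.ofReal_le_ofReal h
    · exfalso
      have hle : persp f w v' ≤ persp f w v := hmono hv' hv h.le
      have hpv' : persp f w v' = 1 := le_antisymm (hle.trans hp) hp'
      have hpv : persp f w v = 1 := le_antisymm hp (hpv' ▸ hle)
      have := hsm (a := v') (b := v)
        ⟨hv', by simp [hpv'], by simp [hpv']⟩ ⟨hv, by simp [hpv], by simp [hpv]⟩ h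
      simp [hpv, hpv'] at this
  · by_contra hlt
    push_neg at hlt
    obtain ⟨c, hc1, hc2⟩ := exists_between hlt
    have hcT : c ≠ ⊤ := hc2.ne_top
    have hc0 : c ≠ 0 := fun h => by simp [h] at hc1
    set v := c.toReal with hvdef
    have hv : 0 < v := ENNReal.toReal_pos hc0 hcT
    have hofc : ENNReal.ofReal v = c := ENNReal.ofReal_toReal hcT
    have hnS : ¬ persp f w v ≤ 1 := fun hle =>
      absurd (hofc ▸ ofReal_le_radSup_of_persp_le_one hv hle) hc1.not_ge
    have h1 : 1 ≤ persp f w v := (not_le.mp hnS).le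
    have : radInf f w ≤ c := hofc ▸ le_trans (iInf_le _ v) (by rw [iInf_pos hv, iInf_pos h1])
    exact absurd (this.trans_lt hc2) (lt_irrefl _)

lemma scalar_implicit {E : Type*} [NormedAddCommGroup E] [NormedSpace ℝ E]
    [FiniteDimensional ℝ E]
    {F : E × ℝ → ℝ} {x₀ : E} {v₀ : ℝ} {k : ℕ} (hk : 1 ≤ k)
    (hF : ContDiffAt ℝ k F (x₀, v₀)) {L : E × ℝ →L[ℝ] ℝ} (hL : HasFDerivAt F L (x₀, v₀))
    (hb : L (0, 1) ≠ 0) (h0 : F (x₀, v₀) = 0) :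
    ∃ φ : E → ℝ, ContDiffAt ℝ k φ x₀ ∧ φ x₀ = v₀ ∧ (∀ᶠ z in 𝓝 x₀, F (z, φ z) = 0) ∧
      fderiv ℝ φ x₀ = -(L (0, 1))⁻¹ • (L.comp (inl ℝ E ℝ)) := by
  set b := L (0, 1) with hbdef
  have hdec : ∀ p : E × ℝ, L p = L (p.1, 0) + p.2 * b := by
    intro p
    have hp : p = (p.1, (0 : ℝ)) + p.2 • ((0 : E), (1 : ℝ)) := by
      ext <;> simp
    rw [hbdef]
    conv_lhs => rw [hp]
    rw [map_add, map_smul]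
    simp [smul_eq_mul]
  set Lf : E × ℝ →L[ℝ] E × ℝ := (fst ℝ E ℝ).prod L with hLf
  set Li : E × ℝ →L[ℝ] E × ℝ :=
    (fst ℝ E ℝ).prod (b⁻¹ • (snd ℝ E ℝ - L.comp ((inl ℝ E ℝ).comp (fst ℝ E ℝ)))) with hLi
  have hLi_apply : ∀ q : E × ℝ, Li q = (q.1, b⁻¹ * (q.2 - L (q.1, 0))) := by
    intro q; simp [hLi, smul_eq_mul]
  have hLf_apply : ∀ p : E × ℝ, Lf p = (p.1, L p) := fun p => rfl
  have h₁ : Function.LeftInverse Li Lf := by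
    intro p
    rw [hLf_apply, hLi_apply]
    have := hdec p
    ext
    · rfl
    · show b⁻¹ * (L p - L (p.1, 0)) = p.2
      rw [this]; field_simp; ring
  have h₂ : Function.RightInverse Li Lf := by
    intro q
    rw [hLi_apply, hLf_apply]
    ext
    · rfl
    · show L (q.1, b⁻¹ * (q.2 - L (q.1, 0))) = q.2
      rw [hdec (q.1, b⁻¹ * (q.2 - L (q.1, 0)))]
      field_simp
      ring
  set e : (E × ℝ) ≃L[ℝ] (E × ℝ) := ContinuousLinearEquiv.equivOfInverse Lf Li h₁ h₂ with he
  set Φ : E × ℝ → E × ℝ := fun p => (p.1, F p) with hΦ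
  have hΦd : HasFDerivAt Φ (e : (E × ℝ) →L[ℝ] E × ℝ) (x₀, v₀) := by
    have : HasFDerivAt Φ Lf (x₀, v₀) := (hasFDerivAt_fst).prodMk hL
    convert this using 2
    ext p <;> rfl
  have hΦk : ContDiffAt ℝ k Φ (x₀, v₀) := (contDiff_fst.contDiffAt).prodMk hF
  have hn : (1 : WithTop ℕ∞) ≤ (k : WithTop ℕ∞) := by exact_mod_cast hk
  set hs := hΦk.hasStrictFDerivAt' hΦd (by exact_mod_cast (show k ≠ 0 by omega)) with hsdef
  set ψ : E × ℝ → E × ℝ := hs.localInverse Φ e (x₀, v₀) with hψ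
  have hΦ0 : Φ (x₀, v₀) = (x₀, 0) := by simp [hΦ, h0]
  have hψk : ContDiffAt ℝ k ψ (x₀, 0) := by
    have := hΦk.to_localInverse (f' := e) hΦd (by exact_mod_cast (show k ≠ 0 by omega))
    rwa [hΦ0] at this
  have hψ0 : ψ (x₀, 0) = (x₀, v₀) := by
    have := hs.localInverse_apply_image
    rwa [hΦ0] at this
  set φ : E → ℝ := fun z => (ψ (z, 0)).2 with hφ
  have hin : ContDiffAt ℝ k (fun z : E => ψ (z, 0)) x₀ := by
    have hpair : ContDiffAt ℝ k (fun z : E => ((z, (0 : ℝ)) : E × ℝ)) x₀ :=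
      contDiffAt_id.prodMk contDiffAt_const
    exact hψk.comp x₀ hpair
  have hφk : ContDiffAt ℝ k φ x₀ := (contDiff_snd.contDiffAt).comp x₀ hin
  have hφx₀ : φ x₀ = v₀ := by rw [hφ]; simp [hψ0]
  have hev : ∀ᶠ z in 𝓝 x₀, Φ (ψ (z, 0)) = (z, 0) := by
    have hri := hs.eventually_right_inverse
    rw [hΦ0] at hri
    have hcont : Filter.Tendsto (fun z : E => ((z, (0 : ℝ)) : E × ℝ)) (𝓝 x₀) (𝓝 (x₀, 0)) :=
      (continuous_id.prodMk continuous_const).tendsto x₀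
    exact hcont.eventually hri
  have hev0 : ∀ᶠ z in 𝓝 x₀, F (z, φ z) = 0 := by
    filter_upwards [hev] with z h
    have hq1 : (ψ (z, 0)).1 = z := congrArg Prod.fst h
    have hq2 : F (ψ (z, 0)) = 0 := congrArg Prod.snd h
    have h2 : F ((ψ (z, 0)).1, (ψ (z, 0)).2) = 0 := hq2
    rw [hq1] at h2
    exact h2
  refine ⟨φ, hφk, hφx₀, hev0, ?_⟩
  have hφd : DifferentiableAt ℝ φ x₀ := hφk.differentiableAt (by exact_mod_cast (show k ≠ 0 by omega))
  set D := fderiv ℝ φ x₀ with hD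
  have hH : HasFDerivAt (fun z : E => ((z, φ z) : E × ℝ))
      ((ContinuousLinearMap.id ℝ E).prod D) x₀ := (hasFDerivAt_id x₀).prodMk hφd.hasFDerivAt
  have hL' : HasFDerivAt F L (x₀, φ x₀) := by rwa [hφx₀]
  have hG : HasFDerivAt (fun z : E => F (z, φ z))
      (L.comp ((ContinuousLinearMap.id ℝ E).prod D)) x₀ := hL'.comp x₀ hH
  have hzero : (fun z : E => F (z, φ z)) =ᶠ[𝓝 x₀] fun _ => (0 : ℝ) := hev0
  have hfz : fderiv ℝ (fun z : E => F (z, φ z)) x₀ = 0 := by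
    rw [hzero.fderiv_eq]; exact fderiv_const_apply 0
  have hcomp0 : L.comp ((ContinuousLinearMap.id ℝ E).prod D) = 0 := by
    rw [← hG.fderiv]; exact hfz
  have key : ∀ w : E, L (w, D w) = 0 := by
    intro w
    have := DFunLike.congr_fun hcomp0 w
    simpa using this
  ext w
  have hk2 := key w
  rw [hdec (w, D w)] at hk2
  simp only [coe_smul', Pi.smul_apply, coe_comp', Function.comp_apply, inl_apply,
    smul_eq_mul, Pi.neg_apply, neg_smul]
  show D w = -b⁻¹ * L (w, 0)
  have : D w * b = -L (w, 0) := by linarith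
  field_simp at this ⊢
  linarith [this]

set_option maxHeartbeats 800000 in
lemma forward_aux {f : E → ℝ≥0∞} (hrad : StrictUpperRadial f)
    {x y : E} {k : ℕ} (hk : 1 ≤ k) {u : ℝ} (hu : 0 < u)
    (hx : x = u⁻¹ • y) (hfxt : (f x).toReal = u⁻¹)
    (hgy : radSup f y = ENNReal.ofReal u)
    (hS : SmoothlyRadialAt f k x) :
    SmoothlyRadialAt (radSup f) k y ∧
      gradient (fun z => ((radSup f) z).toReal) y =
        (⟪gradient (fun z => (f z).toReal) x, x⟫ - (f x).toReal)⁻¹ •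
          gradient (fun z => (f z).toReal) x := by
  obtain ⟨⟨U, hU, hUfin, hUsm⟩, hneg⟩ := hS
  set f' : E → ℝ := fun z => (f z).toReal with hf'def
  have hxU : x ∈ interior U := mem_interior_iff_mem_nhds.mpr hU
  have hUo : IsOpen (interior U) := isOpen_interior
  have hf'k : ContDiffAt ℝ k f' x :=
    (hUsm.mono interior_subset).contDiffAt (hUo.mem_nhds hxU)
  have hn : (1 : WithTop ℕ∞) ≤ (k : WithTop ℕ∞) := by exact_mod_cast hk
  have hune : u ≠ 0 := hu.ne'
  have hyx : y = u • x := by rw [hx, smul_smul, mul_inv_cancel₀ hune, one_smul]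
  set A := fderiv ℝ f' x with hA
  have hf'd : HasFDerivAt f' A x := (hf'k.differentiableAt (by exact_mod_cast (show k ≠ 0 by omega))).hasFDerivAt
  have hAy : A y = u * A x := by rw [hyx, map_smul, smul_eq_mul]
  set G : E × ℝ → E := fun p => p.2⁻¹ • p.1 with hG
  have hGx : G (y, u) = x := by rw [hG]; exact hx.symm
  set F : E × ℝ → ℝ := fun p => p.2 * f' (G p) - 1 with hF
  -- smoothness of F
  have hGk : ContDiffAt ℝ k G (y, u) :=
    ((contDiff_snd.contDiffAt).inv (by exact hune)).smul (contDiff_fst.contDiffAt)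
  have hf'Gk : ContDiffAt ℝ k (fun p => f' (G p)) (y, u) := by
    have h := hf'k; rw [← hGx] at h; exact h.comp _ hGk
  have hFk : ContDiffAt ℝ k F (y, u) :=
    ((contDiff_snd.contDiffAt).mul hf'Gk).sub contDiffAt_const
  -- derivative of F
  have hinv : HasFDerivAt (fun p : E × ℝ => (p.2)⁻¹)
      ((-(u ^ 2)⁻¹ : ℝ) • ContinuousLinearMap.snd ℝ E ℝ) (y, u) :=
    (hasDerivAt_inv hune).comp_hasFDerivAt _ hasFDerivAt_snd
  have hGd : HasFDerivAt G
      ((u⁻¹ : ℝ) • ContinuousLinearMap.fst ℝ E ℝ +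
        (((-(u ^ 2)⁻¹ : ℝ) • ContinuousLinearMap.snd ℝ E ℝ)).smulRight y) (y, u) :=
    hinv.smul hasFDerivAt_fst
  set Lg := (u⁻¹ : ℝ) • ContinuousLinearMap.fst ℝ E ℝ +
        (((-(u ^ 2)⁻¹ : ℝ) • ContinuousLinearMap.snd ℝ E ℝ)).smulRight y with hLg
  have hfGd : HasFDerivAt (fun p => f' (G p)) (A.comp Lg) (y, u) := by
    have h := hf'd; rw [← hGx] at h; exact h.comp _ hGd
  have hmul : HasFDerivAt (fun p : E × ℝ => p.2 * f' (G p))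
      ((u : ℝ) • (A.comp Lg) + (f' (G (y, u))) • ContinuousLinearMap.snd ℝ E ℝ) (y, u) :=
    hasFDerivAt_snd.mul hfGd
  set L := A.comp (ContinuousLinearMap.fst ℝ E ℝ) +
      (u⁻¹ - A x) • ContinuousLinearMap.snd ℝ E ℝ with hL
  have hfx' : f' x = u⁻¹ := hfxt
  have hFd : HasFDerivAt F L (y, u) := by
    have h := hmul.sub_const 1
    refine h.congr_fderiv (Eq.symm ?_)
    rw [hGx]
    refine ContinuousLinearMap.ext fun p => ?_
    simp only [hL, hLg, ContinuousLinearMap.add_apply, ContinuousLinearMap.coe_comp',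
      Function.comp_apply, ContinuousLinearMap.coe_smul', Pi.smul_apply,
      ContinuousLinearMap.coe_fst', ContinuousLinearMap.coe_snd',
      ContinuousLinearMap.smulRight_apply, smul_eq_mul, map_add, map_smul]
    rw [hAy, hfx']
    field_simp
    ring
  have hF0 : F (y, u) = 0 := by
    show u * f' (G (y, u)) - 1 = 0
    rw [hGx, hfx', mul_inv_cancel₀ hune, sub_self]
  have hb_eval : L (0, 1) = u⁻¹ - A x := by
    simp [hL]
  have hgradAx : ⟪gradient f' x, x⟫ = A x := by
    rw [hA]
    exact InnerProductSpace.toDual_symm_apply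
  set c : ℝ := ⟪gradient f' x, x⟫ - (f x).toReal with hc
  have hcAx : c = A x - u⁻¹ := by rw [hc, hgradAx, hfxt]
  have hcneg : c < 0 := hneg
  have hb : L (0, 1) ≠ 0 := by
    rw [hb_eval]
    intro h
    have hcneg' := hcneg
    rw [hcAx] at hcneg'
    linarith
  obtain ⟨φ, hφk, hφy, hev, hDφ⟩ := scalar_implicit hk hFk hFd hb hF0
  have hLinl : L.comp (inl ℝ E ℝ) = A := by
    ext w; simp [hL]
  have hDφ' : fderiv ℝ φ y = c⁻¹ • A := by
    rw [hDφ, hLinl, hb_eval]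
    congr 1
    rw [hcAx]
    rw [neg_inv, neg_sub]
  have hφc : ContinuousAt φ y := hφk.continuousAt
  have hpos : ∀ᶠ z in 𝓝 y, 0 < φ z := by
    have := hφc.eventually_mem (isOpen_Ioi.mem_nhds (show φ y ∈ Ioi (0:ℝ) by rw [hφy]; exact hu))
    exact this
  have hWU : ∀ᶠ z in 𝓝 y, (φ z)⁻¹ • z ∈ interior U := by
    have hcont : ContinuousAt (fun z => (φ z)⁻¹ • z) y :=
      (hφc.inv₀ (by rw [hφy]; exact hune)).smul continuousAt_id
    have hval : (φ y)⁻¹ • y = x := by rw [hφy, ← hx]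
    have hmem : interior U ∈ 𝓝 ((φ y)⁻¹ • y) := by rw [hval]; exact hUo.mem_nhds hxU
    exact hcont.eventually_mem hmem
  have hkey : ∀ᶠ z in 𝓝 y, radSup f z = ENNReal.ofReal (φ z) := by
    filter_upwards [hpos, hWU, hev] with z h1 h2 h3
    have hfin : f ((φ z)⁻¹ • z) ≠ ⊤ := hUfin _ (interior_subset h2)
    have hmul1 : φ z * f' ((φ z)⁻¹ • z) = 1 := by
      have h4 : φ z * f' (G (z, φ z)) - 1 = 0 := h3
      simp only [hG] at h4
      linarith
    have hp1 : persp f z (φ z) = 1 := by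
      have : ENNReal.ofReal (φ z) * f ((φ z)⁻¹ • z) = 1 := by
        rw [← ENNReal.ofReal_toReal hfin, ← ENNReal.ofReal_mul h1.le]
        rw [show (f ((φ z)⁻¹ • z)).toReal = f' ((φ z)⁻¹ • z) from rfl, hmul1]
        exact ENNReal.ofReal_one
      exact this
    exact radSup_eq_of_persp_eq_one hrad h1 hp1
  have hgφ : (fun z => (radSup f z).toReal) =ᶠ[𝓝 y] φ := by
    filter_upwards [hkey, hpos] with z h1 h2
    rw [h1, ENNReal.toReal_ofReal h2.le]
  have hgrad : gradient (fun z => (radSup f z).toReal) y = c⁻¹ • gradient f' x := by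
    rw [hgφ.gradient_eq]
    show (InnerProductSpace.toDual ℝ E).symm (fderiv ℝ φ y) = c⁻¹ • gradient f' x
    rw [hDφ', map_smul]
    rfl
  have hgy_toReal : (radSup f y).toReal = u := by rw [hgy, ENNReal.toReal_ofReal hu.le]
  constructor
  · constructor
    · obtain ⟨W, hW, hWsm⟩ := hφk.contDiffOn le_rfl (by simp)
      obtain ⟨S, hS1, hS2⟩ := (hkey.and hpos).exists_mem
      refine ⟨W ∩ S, inter_mem hW hS1, fun z hz => ?_, ?_⟩
      · rw [(hS2 z hz.2).1]; exact ENNReal.ofReal_ne_top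
      · refine (hWsm.mono inter_subset_left).congr fun z hz => ?_
        rw [(hS2 z hz.2).1, ENNReal.toReal_ofReal (hS2 z hz.2).2.le]
    · rw [hgrad, hgy_toReal, real_inner_smul_left]
      have hinnery : ⟪gradient f' x, y⟫ = u * A x := by
        rw [hyx, real_inner_smul_right, hgradAx]
      rw [hinnery]
      have hcne : c ≠ 0 := hcneg.ne
      have hcu : c * u = u * A x - 1 := by
        rw [hcAx, sub_mul, inv_mul_cancel₀ hune]; ring
      have hceq : c⁻¹ * (u * A x) - u = c⁻¹ := by
        have h4 : (u : ℝ) = c⁻¹ * (c * u) := by rw [← mul_assoc, inv_mul_cancel₀ hcne, one_mul]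
        calc c⁻¹ * (u * A x) - u = c⁻¹ * (u * A x) - c⁻¹ * (c * u) := by rw [← h4]
        _ = c⁻¹ * (u * A x - c * u) := by ring
        _ = c⁻¹ := by rw [hcu, sub_sub_cancel, mul_one]
      rw [hceq]
      exact inv_lt_zero.mpr hcneg
  · exact hgrad

set_option maxHeartbeats 1600000 in
lemma backward_aux {f : E → ℝ≥0∞} (hrad : StrictUpperRadial f)
    {x y : E} {k : ℕ} (hk : 1 ≤ k) {u : ℝ} (hu : 0 < u)
    (hx : x = u⁻¹ • y) (hgy : radSup f y = ENNReal.ofReal u)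
    (hT : SmoothlyRadialAt (radSup f) k y) :
    SmoothlyRadialAt f k x := by
  obtain ⟨⟨V, hV, hVfin, hVsm⟩, hneg⟩ := hT
  set g' : E → ℝ := fun z => (radSup f z).toReal with hg'def
  have hyV : y ∈ interior V := mem_interior_iff_mem_nhds.mpr hV
  have hVo : IsOpen (interior V) := isOpen_interior
  have hg'k : ContDiffAt ℝ k g' y :=
    (hVsm.mono interior_subset).contDiffAt (hVo.mem_nhds hyV)
  have hn : (1 : WithTop ℕ∞) ≤ (k : WithTop ℕ∞) := by exact_mod_cast hk
  have hune : u ≠ 0 := hu.ne'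
  have hyx : y = u • x := by rw [hx, smul_smul, mul_inv_cancel₀ hune, one_smul]
  set B := fderiv ℝ g' y with hB
  have hg'd : HasFDerivAt g' B y := (hg'k.differentiableAt (by exact_mod_cast (show k ≠ 0 by omega))).hasFDerivAt
  have hBy : B y = u * B x := by rw [hyx, map_smul, smul_eq_mul]
  have hg'y : g' y = u := by rw [hg'def]; simp only; rw [hgy, ENNReal.toReal_ofReal hu.le]
  set M : E × ℝ → E := fun p => p.2 • p.1 with hM
  have hMx : M (x, u) = y := by rw [hM]; exact hyx.symm
  set H : E × ℝ → ℝ := fun p => g' (M p) - p.2 with hH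
  have hgMk : ContDiffAt ℝ k (fun p => g' (M p)) (x, u) := by
    have h := hg'k; rw [← hMx] at h
    exact h.comp _ ((contDiff_snd.contDiffAt).smul (contDiff_fst.contDiffAt))
  have hHk : ContDiffAt ℝ k H (x, u) := hgMk.sub (contDiff_snd.contDiffAt)
  set Lm := (u : ℝ) • ContinuousLinearMap.fst ℝ E ℝ +
      (ContinuousLinearMap.snd ℝ E ℝ).smulRight x with hLm
  have hMd : HasFDerivAt M Lm (x, u) := by
    have hsnd' : HasFDerivAt (fun p : E × ℝ => p.2) (ContinuousLinearMap.snd ℝ E ℝ)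
        ((x, u) : E × ℝ) := hasFDerivAt_snd
    have hfst' : HasFDerivAt (fun p : E × ℝ => p.1) (ContinuousLinearMap.fst ℝ E ℝ)
        ((x, u) : E × ℝ) := hasFDerivAt_fst
    exact hsnd'.smul hfst'
  have hgMd : HasFDerivAt (fun p => g' (M p)) (B.comp Lm) (x, u) := by
    have h := hg'd; rw [← hMx] at h; exact h.comp _ hMd
  set L := B.comp Lm - ContinuousLinearMap.snd ℝ E ℝ with hL
  have hHd : HasFDerivAt H L (x, u) := hgMd.sub hasFDerivAt_snd
  have hH0 : H (x, u) = 0 := by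
    show g' (M (x, u)) - u = 0
    rw [hMx, hg'y, sub_self]
  have hLm01 : Lm ((0 : E), (1 : ℝ)) = x := by
    simp [hLm]
  have hb_eval : L (0, 1) = B x - 1 := by
    have h2 : L ((0 : E), (1 : ℝ)) = B (Lm ((0 : E), (1 : ℝ))) - ((0 : E), (1 : ℝ)).2 := rfl
    rw [h2, hLm01]
  have hgradBy : ⟪gradient g' y, y⟫ = B y := by
    rw [hB]; exact InnerProductSpace.toDual_symm_apply
  have hbneg : B x - 1 < 0 := by
    have h1 : u * B x - u < 0 := by
      have := hneg
      rw [hgradBy, hBy] at this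
      have h2 : (radSup f y).toReal = u := hg'y
      rw [h2] at this
      exact this
    nlinarith
  have hb : L (0, 1) ≠ 0 := by rw [hb_eval]; exact hbneg.ne
  obtain ⟨τ, hτk, hτx, hevH, hDτ⟩ := scalar_implicit hk hHk hHd hb hH0
  have hLinl : L.comp (inl ℝ E ℝ) = u • B := by
    refine ContinuousLinearMap.ext fun w => ?_
    have h1 : Lm ((w : E), (0 : ℝ)) = u • w := by simp [hLm]
    have h2 : (L.comp (inl ℝ E ℝ)) w = B (Lm ((w : E), (0 : ℝ))) - ((w : E), (0 : ℝ)).2 := rfl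
    rw [h2, h1, map_smul]
    simp [smul_eq_mul]
  have hDτ' : fderiv ℝ τ x = -(B x - 1)⁻¹ • ((u : ℝ) • B) := by
    rw [hDτ, hLinl, hb_eval]
  -- negativity of the partial derivative in a neighborhood
  have hH1 : ContDiffAt ℝ 1 H (x, u) := hHk.of_le (by exact_mod_cast hk)
  obtain ⟨P, hPn, hPsm⟩ := hH1.contDiffOn le_rfl (by simp)
  set P' := interior P with hP'
  have hPo : IsOpen P' := isOpen_interior
  have hxuP' : (x, u) ∈ P' := mem_interior_iff_mem_nhds.mpr hPn
  have hPsm' : ContDiffOn ℝ 1 H P' := hPsm.mono interior_subset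
  have hdiff : DifferentiableOn ℝ H P' := hPsm'.differentiableOn one_ne_zero
  have hfc : ContinuousOn (fderiv ℝ H) P' := hPsm'.continuousOn_fderiv_of_isOpen hPo le_rfl
  have hfc2 : ContinuousAt (fun p => fderiv ℝ H p ((0 : E), (1 : ℝ))) (x, u) :=
    (hfc.clm_apply continuousOn_const).continuousAt (hPo.mem_nhds hxuP')
  have hval_neg : fderiv ℝ H (x, u) ((0 : E), (1 : ℝ)) < 0 := by
    rw [hHd.fderiv, hb_eval]; exact hbneg
  have hQ1 : ∀ᶠ p in 𝓝 (x, u), fderiv ℝ H p ((0 : E), (1 : ℝ)) < 0 :=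
    hfc2.eventually_mem (isOpen_Iio.mem_nhds hval_neg)
  have hQ2 : ∀ᶠ p in 𝓝 (x, u), p ∈ P' := hPo.eventually_mem hxuP'
  have hQ3 : ∀ᶠ p in 𝓝 (x, u), (p.2 • p.1 : E) ∈ interior V := by
    have hcont : ContinuousAt (fun p : E × ℝ => p.2 • p.1) (x, u) :=
      (continuous_snd.smul continuous_fst).continuousAt
    have hmem : interior V ∈ 𝓝 ((u : ℝ) • x) := by rw [← hyx]; exact hVo.mem_nhds hyV
    exact hcont.eventually_mem hmem
  have hQ := (hQ1.and hQ2).and hQ3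
  obtain ⟨s, hs, t, ht, hst⟩ := mem_nhds_prod_iff.mp hQ
  obtain ⟨δ, hδ, hball⟩ := Metric.mem_nhds_iff.mp ht
  set δ₁ := min δ (u / 2) with hδ₁def
  have hδ₁ : 0 < δ₁ := lt_min hδ (by linarith)
  have hδ₁u : δ₁ ≤ u / 2 := min_le_right _ _
  set I : Set ℝ := Ioo (u - δ₁) (u + δ₁) with hI
  have hIt : I ⊆ t := by
    intro v hv
    apply hball
    rw [Real.ball_eq_Ioo]
    exact ⟨by have := hv.1; have := min_le_left δ (u/2); linarith,
      by have := hv.2; have := min_le_left δ (u/2); linarith⟩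
  have hIpos : ∀ v ∈ I, (0 : ℝ) < v := fun v hv => by
    have := hv.1; linarith
  have huI : u ∈ I := ⟨by linarith, by linarith⟩
  -- membership facts
  have hmem_st : ∀ w ∈ s, ∀ v ∈ I, ((fderiv ℝ H (w, v) ((0 : E), (1 : ℝ)) < 0 ∧ (w, v) ∈ P') ∧
      (v • w : E) ∈ interior V) := fun w hw v hv => hst ⟨hw, hIt hv⟩
  -- strict antitonicity
  have hSA : ∀ w ∈ s, StrictAntiOn (fun v => H (w, v)) I := by
    intro w hw
    apply strictAntiOn_of_deriv_neg (convex_Ioo _ _)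
    · intro v hv
      have hp := (hmem_st w hw v hv).1.2
      have hdAt : DifferentiableAt ℝ H (w, v) :=
        (hdiff (w, v) hp).differentiableAt (hPo.mem_nhds hp)
      have hcont : ContinuousAt (fun v' : ℝ => H (w, v')) v :=
        hdAt.continuousAt.comp ((continuous_const.prodMk continuous_id).continuousAt)
      exact hcont.continuousWithinAt
    · intro v hv
      rw [interior_Ioo] at hv
      have hp := (hmem_st w hw v hv).1.2
      have hdAt : DifferentiableAt ℝ H (w, v) :=
        (hdiff (w, v) hp).differentiableAt (hPo.mem_nhds hp)
      have hcurve : HasDerivAt (fun v' : ℝ => ((w, v') : E × ℝ)) ((0 : E), (1 : ℝ)) v :=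
        (hasDerivAt_const v w).prodMk (hasDerivAt_id v)
      have hcomp : HasDerivAt (H ∘ fun v' : ℝ => ((w, v') : E × ℝ))
          (fderiv ℝ H (w, v) ((0 : E), (1 : ℝ))) v :=
        hdAt.hasFDerivAt.comp_hasDerivAt_of_eq v hcurve rfl
      have hderiv : deriv (fun v' : ℝ => H (w, v')) v =
          fderiv ℝ H (w, v) ((0 : E), (1 : ℝ)) := hcomp.deriv
      rw [hderiv]
      exact (hmem_st w hw v hv).1.1
  -- the main pointwise identification of f
  have hτc : ContinuousAt τ x := hτk.continuousAt
  have hτI : ∀ᶠ w in 𝓝 x, τ w ∈ I := by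
    refine hτc.eventually_mem ?_
    rw [hτx]
    exact isOpen_Ioo.mem_nhds huI
  have hsev : ∀ᶠ w in 𝓝 x, w ∈ s := hs
  have main : ∀ᶠ w in 𝓝 x, f w = ENNReal.ofReal (τ w)⁻¹ ∧ 0 < τ w := by
    filter_upwards [hτI, hsev, hevH] with w hwI hws hH0w
    have ht0pos : 0 < τ w := hIpos _ hwI
    have SA := hSA w hws
    -- persp computation
    have hpersp : ∀ v : ℝ, 0 < v → persp f (v • w) v = ENNReal.ofReal v * f w := by
      intro v hv
      rw [persp, smul_smul, inv_mul_cancel₀ hv.ne', one_smul]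
    have hup : ∀ v ∈ I, ENNReal.ofReal v * f w ≤ 1 → 0 ≤ H (w, v) := by
      intro v hv hle
      have hv0 := hIpos v hv
      have hle' : ENNReal.ofReal v ≤ radSup f (v • w) :=
        ofReal_le_radSup_of_persp_le_one hv0 (by rw [hpersp v hv0]; exact hle)
      have hfin : radSup f (v • w) ≠ ⊤ :=
        hVfin _ (interior_subset (hmem_st w hws v hv).2)
      have : v ≤ g' (v • w) := by
        have h2 := ENNReal.toReal_mono hfin hle'
        rwa [ENNReal.toReal_ofReal hv0.le] at h2
      show 0 ≤ g' (M (w, v)) - v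
      have hMwv : M (w, v) = v • w := rfl
      rw [hMwv]
      linarith
    have hdown : ∀ v ∈ I, 1 < ENNReal.ofReal v * f w → H (w, v) ≤ 0 := by
      intro v hv hgt
      have hv0 := hIpos v hv
      have hle' : radSup f (v • w) ≤ ENNReal.ofReal v :=
        radSup_le_of_persp_gt_one hrad hv0 (by rw [hpersp v hv0]; exact hgt)
      have : g' (v • w) ≤ v := by
        have h2 := ENNReal.toReal_mono ENNReal.ofReal_ne_top hle'
        rwa [ENNReal.toReal_ofReal hv0.le] at h2
      show g' (M (w, v)) - v ≤ 0
      have hMwv : M (w, v) = v • w := rfl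
      rw [hMwv]
      linarith
    have hH0w' : H (w, τ w) = 0 := hH0w
    have hne0 : f w ≠ 0 := by
      intro h0
      set v := (τ w + (u + δ₁)) / 2 with hv
      have hvI : v ∈ I := ⟨by simp only [hv]; linarith [hwI.1, hwI.2],
        by simp only [hv]; linarith [hwI.1, hwI.2]⟩
      have hvgt : τ w < v := by simp only [hv]; linarith [hwI.2]
      have h1 : H (w, v) < 0 := by
        have h3 : H (w, v) < H (w, τ w) := SA hwI hvI hvgt
        rwa [hH0w'] at h3
      have h2 : 0 ≤ H (w, v) := hup v hvI (by rw [h0, mul_zero]; exact zero_le_one)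
      linarith
    have hneT : f w ≠ ⊤ := by
      intro hT
      set v := ((u - δ₁) + τ w) / 2 with hv
      have hvI : v ∈ I := ⟨by have := hwI.1; simp only [hv]; linarith,
        by have := hwI.1; have := hwI.2; simp only [hv]; linarith⟩
      have hvlt : v < τ w := by have := hwI.1; simp only [hv]; linarith
      have h1 : 0 < H (w, v) := by
        have h3 : H (w, τ w) < H (w, v) := SA hvI hwI hvlt
        rwa [hH0w'] at h3
      have h2 : H (w, v) ≤ 0 := by
        apply hdown v hvI
        rw [hT, ENNReal.mul_top (by simp [ENNReal.ofReal_eq_zero]; exact hIpos v hvI)]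
        exact ENNReal.one_lt_top
      linarith
    have hr : 0 < (f w).toReal := ENNReal.toReal_pos hne0 hneT
    set r := (f w).toReal with hrdef
    have hfr : f w = ENNReal.ofReal r := (ENNReal.ofReal_toReal hneT).symm
    have ht0r : τ w = r⁻¹ := by
      rcases lt_trichotomy (r⁻¹) (τ w) with hlt | heq | hgt
      · exfalso
        set v := (max (u - δ₁) r⁻¹ + τ w) / 2 with hv
        have hmaxlt : max (u - δ₁) r⁻¹ < τ w := max_lt hwI.1 hlt
        have hv1 : v < τ w := by simp only [hv]; linarith
        have hv2 : u - δ₁ < v := by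
          have := le_max_left (u - δ₁) r⁻¹; simp only [hv]; linarith
        have hv3 : v < u + δ₁ := lt_trans hv1 hwI.2
        have hvI : v ∈ I := ⟨hv2, hv3⟩
        have hv4 : r⁻¹ < v := by
          have := le_max_right (u - δ₁) r⁻¹; simp only [hv]; linarith
        have hgt1 : 1 < ENNReal.ofReal v * f w := by
          rw [hfr, ← ENNReal.ofReal_mul (hIpos v hvI).le]
          rw [show (1 : ℝ≥0∞) = ENNReal.ofReal 1 from ENNReal.ofReal_one.symm]
          apply (ENNReal.ofReal_lt_ofReal_iff (by nlinarith)).mpr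
          have h5 := mul_pos (sub_pos.mpr hv4) hr
          rw [sub_mul, inv_mul_cancel₀ hr.ne'] at h5
          linarith
        have h2 := hdown v hvI hgt1
        have h1 : 0 < H (w, v) := by
          have h3 : H (w, τ w) < H (w, v) := SA hvI hwI hv1
          rwa [hH0w'] at h3
        linarith
      · exact heq.symm
      · exfalso
        set v := (τ w + min (u + δ₁) r⁻¹) / 2 with hv
        have hminlt : τ w < min (u + δ₁) r⁻¹ := lt_min hwI.2 hgt
        have hv1 : τ w < v := by simp only [hv]; linarith
        have hv2 : v < u + δ₁ := by
          have := min_le_left (u + δ₁) r⁻¹; simp only [hv]; linarith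
        have hv3 : u - δ₁ < v := lt_trans hwI.1 hv1
        have hvI : v ∈ I := ⟨hv3, hv2⟩
        have hv4 : v < r⁻¹ := by
          have := min_le_right (u + δ₁) r⁻¹; simp only [hv]; linarith
        have hle1 : ENNReal.ofReal v * f w ≤ 1 := by
          rw [hfr, ← ENNReal.ofReal_mul (hIpos v hvI).le]
          apply ENNReal.ofReal_le_one.mpr
          have h5 := mul_pos (sub_pos.mpr hv4) hr
          rw [sub_mul, inv_mul_cancel₀ hr.ne'] at h5
          linarith
        have h2 := hup v hvI hle1
        have h1 : H (w, v) < 0 := by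
          have h3 : H (w, v) < H (w, τ w) := SA hwI hvI hv1
          rwa [hH0w'] at h3
        linarith
    refine ⟨?_, ht0pos⟩
    rw [hfr, ht0r, inv_inv]
  -- assemble SmoothlyRadialAt
  have hfev : (fun w => (f w).toReal) =ᶠ[𝓝 x] fun w => (τ w)⁻¹ := by
    filter_upwards [main] with w hw
    rw [hw.1, ENNReal.toReal_ofReal (inv_nonneg.mpr hw.2.le)]
  have hτd : HasFDerivAt τ (fderiv ℝ τ x) x := (hτk.differentiableAt (by exact_mod_cast (show k ≠ 0 by omega))).hasFDerivAt
  have hτxne : τ x ≠ 0 := by rw [hτx]; exact hune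
  have hinvd : HasFDerivAt (fun w => (τ w)⁻¹)
      ((-(u ^ 2)⁻¹ : ℝ) • fderiv ℝ τ x) x := by
    have h := (hasDerivAt_inv hτxne).comp_hasFDerivAt x hτd
    rwa [hτx] at h
  have hfD : fderiv ℝ (fun z => (f z).toReal) x = (-(u ^ 2)⁻¹ : ℝ) • fderiv ℝ τ x := by
    rw [hfev.fderiv_eq, hinvd.fderiv]
  have hfx_toReal : (f x).toReal = u⁻¹ := by
    have h := main.self_of_nhds
    rw [h.1, hτx, ENNReal.toReal_ofReal (inv_nonneg.mpr hu.le)]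
  constructor
  · obtain ⟨W, hWn, hWsm⟩ := hτk.contDiffOn le_rfl (by simp)
    obtain ⟨S, hS1, hS2⟩ := main.exists_mem
    refine ⟨W ∩ S, inter_mem hWn hS1, fun z hz => ?_, ?_⟩
    · rw [(hS2 z hz.2).1]; exact ENNReal.ofReal_ne_top
    · refine ((hWsm.mono inter_subset_left).inv fun z hz => ((hS2 z hz.2).2).ne').congr
        fun z hz => ?_
      rw [(hS2 z hz.2).1, ENNReal.toReal_ofReal (inv_nonneg.mpr (hS2 z hz.2).2.le)]
      rfl
  · have hinner : ⟪gradient (fun z => (f z).toReal) x, x⟫ =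
        fderiv ℝ (fun z => (f z).toReal) x x := InnerProductSpace.toDual_symm_apply
    rw [hinner, hfD, hfx_toReal]
    rw [hDτ']
    simp only [ContinuousLinearMap.smul_apply, smul_eq_mul]
    set β := B x - 1 with hβ
    have hβne : β ≠ 0 := hbneg.ne
    have heqval : -(u ^ 2)⁻¹ * (-β⁻¹ * (u * B x)) - u⁻¹ = (u * β)⁻¹ := by
      field_simp
      ring
    rw [heqval]
    exact inv_lt_zero.mpr (mul_neg_of_pos_of_neg hu hbneg)

end Aux

/-- For strictly upper radial `f` and `(x, f(x)) = Γ(y, f^Γ(y))` in `E × ℝ₊₊`: `f` is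
finite and `k` times continuously differentiable near `x` with `⟨∇f(x),x⟩ − f(x) < 0`
iff `f^Γ` (which equals `f_Γ`) is so near `y` with `⟨∇f^Γ(y),y⟩ − f^Γ(y) < 0`, and then
`∇f^Γ(y) = ∇f(x) / (⟨∇f(x),x⟩ − f(x))`. -/
theorem radial_differentiability (f : E → ℝ≥0∞) (hrad : StrictUpperRadial f)
    (x y : E) (k : ℕ) (hk : 1 ≤ k)
    (hfx : f x ≠ 0 ∧ f x ≠ ⊤) (hfy : radSup f y ≠ 0 ∧ radSup f y ≠ ⊤)
    (hxy : x = ((radSup f y).toReal)⁻¹ • y ∧ (f x).toReal = ((radSup f y).toReal)⁻¹) :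
    radSup f = radInf f ∧
    (SmoothlyRadialAt f k x ↔ SmoothlyRadialAt (radSup f) k y) ∧
    (SmoothlyRadialAt f k x →
      gradient (fun z => ((radSup f) z).toReal) y =
        (⟪gradient (fun z => (f z).toReal) x, x⟫ - (f x).toReal)⁻¹ •
          gradient (fun z => (f z).toReal) x) := by
  have hu : 0 < (radSup f y).toReal := ENNReal.toReal_pos hfy.1 hfy.2
  have hgy : radSup f y = ENNReal.ofReal ((radSup f y).toReal) :=
    (ENNReal.ofReal_toReal hfy.2).symm
  exact ⟨radSup_eq_radInf hrad,
    ⟨fun hS => (forward_aux hrad hk hu hxy.1 hxy.2 hgy hS).1,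
      fun hT => backward_aux hrad hk hu hxy.1 hgy hT⟩,
    fun hS => (forward_aux hrad hk hu hxy.1 hxy.2 hgy hS).2⟩
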